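/- Let n ≥ 1 and λ ∈ [0, 2π/n). If F ∈ D̄_n(λ), then all zeros of Δ_λ^n[F] lie in the closed unit disk. If moreover F ∈ D_n(λ), then all zeros of Δ_λ^n[F] lie in the open unit disk 𝔻. -/

import Mathlib

open Polynomial Complex Finset
open scoped Classical

noncomputable section

/-- `uexp t = e^{it}`. -/
def uexp (t : ℝ) : ℂ := Complex.exp (Complex.I * t)

/-- Angular distance between two angles, measured on the circle `ℝ / 2πℤ`. -/
def angDist (x y : ℝ) : ℝ := ‖((x - y : ℝ) : AddCircle (2 * Real.pi))‖

/-- `polyOn n Ω` : polynomials of degree exactly `n` with all zeros in `Ω`. -/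
def polyOn (n : ℕ) (Ω : Set ℂ) : Set (Polynomial ℂ) :=
  {P | P.natDegree = n ∧ ∀ z : ℂ, P.IsRoot z → z ∈ Ω}

/-- `polyLe n Ω` : nonzero polynomials of degree at most `n` with all zeros in `Ω`. -/
def polyLe (n : ℕ) (Ω : Set ℂ) : Set (Polynomial ℂ) :=
  {P | P ≠ 0 ∧ P.natDegree ≤ n ∧ ∀ z : ℂ, P.IsRoot z → z ∈ Ω}

/-- Suffridge's class `T̄_n(λ)`. -/
def Tbar (n : ℕ) (lam : ℝ) : Set (Polynomial ℂ) :=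
  {P | ∃ (a : ℂ) (θ : Fin n → ℝ), a ≠ 0 ∧
    P = C a * ∏ j, (X - C (uexp (θ j))) ∧
    ∀ j k, j ≠ k → lam ≤ angDist (θ j) (θ k)}

/-- Suffridge's class `T_n(λ)`. -/
def Tstrict (n : ℕ) (lam : ℝ) : Set (Polynomial ℂ) :=
  {P | ∃ (a : ℂ) (θ : Fin n → ℝ), a ≠ 0 ∧
    P = C a * ∏ j, (X - C (uexp (θ j))) ∧
    ∀ j k, j ≠ k → lam < angDist (θ j) (θ k)}

/-- The quantity `e^{-inλ/2} F₊(z)/F₋(z)`. -/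
def dQuot (n : ℕ) (lam : ℝ) (F : Polynomial ℂ) (z : ℂ) : ℂ :=
  uexp (-(n * lam) / 2) * F.eval (uexp (lam / 2) * z) / F.eval (uexp (-(lam / 2)) * z)

/-- The class `D̄_n(λ)` for `λ ∈ [0, 2π/n]`. -/
def Dbar (n : ℕ) (lam : ℝ) : Set (Polynomial ℂ) :=
  if lam = 0 then polyOn n {z | ‖z‖ ≤ 1}
  else if lam = 2 * Real.pi / n then
    {P | ∃ a b : ℂ, a ≠ 0 ∧ ‖b‖ ≤ 1 ∧ P = C a * (X ^ n - C b)}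
  else {P | P.natDegree = n ∧ ∀ z : ℂ, 1 < ‖z‖ → 0 < (dQuot n lam P z).im}

/-- The class `D_n(λ)` for `λ ∈ [0, 2π/n)`. -/
def Dset (n : ℕ) (lam : ℝ) : Set (Polynomial ℂ) :=
  Tstrict n lam ∪
    (if lam = 0 then polyOn n {z | ‖z‖ < 1}
     else {P | P.natDegree = n ∧ ∀ z : ℂ, 1 ≤ ‖z‖ → 0 < (dQuot n lam P z).im})

/-- `Q_n(λ; z) = ∏_{j=1}^n (1 + e^{i(2j-n-1)λ/2} z)`. -/
def Qpoly (n : ℕ) (lam : ℝ) : Polynomial ℂ :=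
  ∏ j ∈ Finset.range n, (1 + C (uexp ((2 * (j : ℝ) + 1 - n) * lam / 2)) * X)

/-- The coefficients `C_k^{(n)}(λ)` of `Q_n(λ; ·)`. -/
def Ccoef (n k : ℕ) (lam : ℝ) : ℂ := (Qpoly n lam).coeff k

/-- The Suffridge convolution `F *_λ G` of two degree-`n` polynomials. -/
def lamConv (n : ℕ) (lam : ℝ) (F G : Polynomial ℂ) : Polynomial ℂ :=
  ∑ k ∈ Finset.range (n + 1), C (F.coeff k * G.coeff k / Ccoef n k lam) * X ^ k

/-- `preOf n lam f = f * Q_n(λ;·) = ∑ C_k^{(n)}(λ) a_k z^k`; so `f` belongs to the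
pre-coefficient class `P𝒞_n(λ)` iff `preOf n lam f ∈ 𝒞_n(λ)`. -/
def preOf (n : ℕ) (lam : ℝ) (f : Polynomial ℂ) : Polynomial ℂ :=
  ∑ k ∈ Finset.range (n + 1), C (Ccoef n k lam * f.coeff k) * X ^ k

/-- Pre-extremal polynomials `a ∑_{k=0}^n b^k z^k`, `a ≠ 0`, `|b| = 1`. -/
def PreExtremal (n : ℕ) (f : Polynomial ℂ) : Prop :=
  ∃ a b : ℂ, a ≠ 0 ∧ ‖b‖ = 1 ∧
    f = C a * ∑ k ∈ Finset.range (n + 1), C (b ^ k) * X ^ k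

/-- The `n`-inverse `F^{*n}(z) = z^n conj (F (1/ conj z))`. -/
def nInv (n : ℕ) (F : Polynomial ℂ) : Polynomial ℂ :=
  (F.reflect n).map (starRingEnd ℂ)

/-- `F₊(z) = F(e^{iλ/2} z)` as a polynomial. -/
def plusPoly (lam : ℝ) (F : Polynomial ℂ) : Polynomial ℂ :=
  F.comp (C (uexp (lam / 2)) * X)

/-- `F₋(z) = F(e^{-iλ/2} z)` as a polynomial. -/
def minusPoly (lam : ℝ) (F : Polynomial ℂ) : Polynomial ℂ :=
  F.comp (C (uexp (-(lam / 2))) * X)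

/-- The operator `Δ_λ^n[F](z) = (F₊(z) - F₋(z)) / (2 i z sin(nλ/2))`, with
`Δ_0^n[F] = F'/n`. -/
def Delta (n : ℕ) (lam : ℝ) (F : Polynomial ℂ) : Polynomial ℂ :=
  if lam = 0 then C ((n : ℂ)⁻¹) * derivative F
  else C ((2 * Complex.I * (Real.sin (n * lam / 2) : ℂ))⁻¹) *
    (plusPoly lam F - minusPoly lam F).divX

/-- `P` and `Q` (of degree `n`, zeros on the unit circle) have strictly interspersed
zeros: they are coprime and their zeros alternate on the unit circle. -/
def StrictIntersp (n : ℕ) (P Q : Polynomial ℂ) : Prop :=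
  IsCoprime P Q ∧ ∃ (a b : ℂ) (θ φ : ℕ → ℝ), a ≠ 0 ∧ b ≠ 0 ∧
    P = C a * ∏ j ∈ Finset.range n, (X - C (uexp (θ j))) ∧
    Q = C b * ∏ j ∈ Finset.range n, (X - C (uexp (φ j))) ∧
    (∀ j, j < n → θ j < φ j) ∧
    (∀ j, j + 1 < n → φ j < θ (j + 1)) ∧
    (0 < n → φ (n - 1) < θ 0 + 2 * Real.pi)

/-- The Grace–Szegő convolution of two polynomials of degree ≤ n. -/
def GSconv (n : ℕ) (F G : Polynomial ℂ) : Polynomial ℂ :=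
  ∑ k ∈ Finset.range (n + 1), C (F.coeff k * G.coeff k / (n.choose k : ℂ)) * X ^ k

/-- `Ω_{τ,γ}` : the image of the unit disk under `z ↦ τz/(1+γz)`. -/
def OmegaSet (τ : ℂ) (γ : ℝ) : Set ℂ :=
  (fun z => τ * z / (1 + (γ : ℂ) * z)) '' Metric.ball 0 1

/-- `I_γ = {z : |z| + γ|1+z| < 1}`. -/
def Iset (γ : ℝ) : Set ℂ := {z | ‖z‖ + γ * ‖1 + z‖ < 1}

/-- `O_γ = {z : |z| - γ|1+z| > 1}`. -/
def Oset (γ : ℝ) : Set ℂ := {z | 1 < ‖z‖ - γ * ‖1 + z‖}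

end


section MyAux

open Filter Topology

lemma uexp_ne_zero (t : ℝ) : uexp t ≠ 0 := Complex.exp_ne_zero _

lemma uexp_abs (t : ℝ) : ‖uexp t‖ = 1 := by
  rw [uexp, Complex.norm_exp]; simp

lemma uexp_add (s t : ℝ) : uexp (s + t) = uexp s * uexp t := by
  rw [uexp, uexp, uexp, ← Complex.exp_add]; push_cast; ring_nf

lemma uexp_im (t : ℝ) : (uexp t).im = Real.sin t := by
  rw [uexp, mul_comm, Complex.exp_ofReal_mul_I_im]

lemma uexp_inj {s t : ℝ} (h : uexp s = uexp t) : ∃ m : ℤ, s = t + m * (2 * Real.pi) := by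
  rw [uexp, uexp] at h
  obtain ⟨m, hm⟩ := Complex.exp_eq_exp_iff_exists_int.mp h
  have him := congrArg Complex.im hm
  simp [Complex.mul_im, Complex.add_im] at him
  exact ⟨m, by linarith⟩

lemma angDist_le {x y lam : ℝ} (hl : 0 ≤ lam) (m : ℤ) (h : x - y = -lam + m * (2 * Real.pi)) :
    angDist x y ≤ lam := by
  rw [angDist, h]
  have hz : (((m : ℝ) * (2 * Real.pi) : ℝ) : AddCircle (2 * Real.pi)) = 0 :=
    (AddCircle.coe_eq_zero_iff _).2 ⟨m, by rw [zsmul_eq_mul]⟩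
  have h2 : ((-lam + (m : ℝ) * (2 * Real.pi) : ℝ) : AddCircle (2 * Real.pi))
      = ((-lam : ℝ) : AddCircle (2 * Real.pi)) := by
    rw [AddCircle.coe_add, hz, add_zero]
  rw [h2]
  calc ‖((-lam : ℝ) : AddCircle (2 * Real.pi))‖ ≤ ‖(-lam : ℝ)‖ := QuotientAddGroup.norm_mk_le_norm
    _ = lam := by rw [Real.norm_eq_abs, abs_neg, _root_.abs_of_nonneg hl]

lemma uexp_ne_of_angDist_pos {s t lam : ℝ} (hl : 0 ≤ lam) (h : lam < angDist s t) :
    uexp s ≠ uexp t := by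
  intro he
  obtain ⟨m, hm⟩ := uexp_inj he
  have : angDist s t ≤ 0 := angDist_le le_rfl m (by rw [hm]; ring)
  linarith

lemma key_pos {z r : ℂ} (hne : z ≠ r) (hle : ‖r‖ ≤ ‖z‖) :
    0 < (z * (z - r)⁻¹).re := by
  have h1 : z - r ≠ 0 := sub_ne_zero.2 hne
  have h2 : 0 < Complex.normSq (z - r) := Complex.normSq_pos.2 h1
  have h3 : Complex.normSq r ≤ Complex.normSq z := by
    rw [← Complex.sq_norm, ← Complex.sq_norm]
    exact pow_le_pow_left₀ (norm_nonneg r) hle 2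
  rw [Complex.inv_def, ← mul_assoc]
  rw [mul_comm (z * (starRingEnd ℂ) (z - r))]
  rw [Complex.re_ofReal_mul]
  have h4 : (z * (starRingEnd ℂ) (z - r)).re
      = (Complex.normSq z - Complex.normSq r + Complex.normSq (z - r)) / 2 := by
    simp [Complex.normSq_apply, Complex.mul_re, Complex.conj_re, Complex.conj_im,
      Complex.sub_re, Complex.sub_im]
    ring
  rw [h4]
  have h5 : 0 < (Complex.normSq (z - r))⁻¹ := inv_pos.2 h2
  nlinarith [h2, h3, h5]

lemma eval_deriv_eq (F : Polynomial ℂ) (z : ℂ) (hF0 : F ≠ 0) (hz : F.eval z ≠ 0) :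
    F.derivative.eval z = F.eval z * ((F.roots.map (fun r => (z - r)⁻¹)).sum) := by
  classical
  have hzr : ∀ r ∈ F.roots, z - r ≠ 0 := by
    intro r hr
    have : F.eval r = 0 := (Polynomial.isRoot_of_mem_roots hr)
    intro he
    rw [sub_eq_zero] at he
    exact hz (he ▸ this)
  have heq := (IsAlgClosed.splits F).eq_prod_roots
  have hevalF : F.eval z = F.leadingCoeff * (F.roots.map (fun a => z - a)).prod := by
    conv_lhs => rw [heq]
    rw [eval_mul, eval_C]
    congr 1
    rw [eval_multiset_prod, Multiset.map_map]
    exact congrArg _ (Multiset.map_congr rfl fun a _ => by simp)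
  have hder : F.derivative.eval z
      = F.leadingCoeff *
        (F.roots.map (fun i => ((F.roots.erase i).map (fun a => z - a)).prod)).sum := by
    conv_lhs => rw [heq]
    rw [Polynomial.derivative_C_mul, eval_mul, eval_C, Polynomial.derivative_prod]
    rw [← Polynomial.coe_evalRingHom, map_multiset_sum, Multiset.map_map]
    refine congrArg _ (congrArg _ (Multiset.map_congr rfl fun i _ => ?_))
    simp only [Function.comp_apply, Polynomial.derivative_X_sub_C, mul_one, coe_evalRingHom]
    rw [eval_multiset_prod, Multiset.map_map]
    exact congrArg _ (Multiset.map_congr rfl fun a _ => by simp)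
  rw [hder, hevalF, mul_assoc]
  congr 1
  rw [Multiset.sum_map_mul_left.symm]
  apply congrArg
  apply Multiset.map_congr rfl
  intro i hi
  have h1 : (F.roots.map (fun a => z - a)).prod
      = (z - i) * ((F.roots.erase i).map (fun a => z - a)).prod := by
    conv_lhs => rw [← Multiset.cons_erase hi]
    rw [Multiset.map_cons, Multiset.prod_cons]
  rw [h1, mul_comm (z - i), mul_assoc, mul_inv_cancel₀ (hzr i hi), mul_one]

lemma deriv_ne_zero (F : Polynomial ℂ) (z : ℂ) (hd : 0 < F.natDegree)
    (hz : F.eval z ≠ 0)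
    (hroots : ∀ r ∈ F.roots, ‖r‖ ≤ ‖z‖) :
    F.derivative.eval z ≠ 0 := by
  have hF0 : F ≠ 0 := fun h => by simp [h] at hd
  have hne : ∀ r ∈ F.roots, z ≠ r := by
    intro r hr he
    exact hz (he ▸ (Polynomial.isRoot_of_mem_roots hr))
  obtain ⟨r₀, hr₀⟩ : ∃ r, r ∈ F.roots := by
    obtain ⟨x, hx⟩ := IsAlgClosed.exists_root F
      (Polynomial.natDegree_pos_iff_degree_pos.mp hd).ne'
    exact ⟨x, (Polynomial.mem_roots hF0).2 hx⟩
  rw [eval_deriv_eq F z hF0 hz]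
  apply mul_ne_zero hz
  intro hsum
  have him : ((F.roots.map (fun r => (z * (z - r)⁻¹).re)).sum) = 0 := by
    have h2 : (F.roots.map (fun r => z * (z - r)⁻¹)).sum = 0 := by
      rw [Multiset.sum_map_mul_left, hsum, mul_zero]
    have h3 := congrArg Complex.reAddGroupHom h2
    rw [map_multiset_sum, Multiset.map_map, map_zero] at h3
    exact h3
  have hpos : 0 < ((F.roots.map (fun r => (z * (z - r)⁻¹).re)).sum) := by
    have hmem : ∀ x ∈ F.roots.map (fun r => (z * (z - r)⁻¹).re), 0 < x := by
      intro x hx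
      obtain ⟨r, hr, rfl⟩ := Multiset.mem_map.1 hx
      exact key_pos (hne r hr) (hroots r hr)
    have hne0 : F.roots.map (fun r => (z * (z - r)⁻¹).re) ≠ 0 := by
      simp only [ne_eq, Multiset.map_eq_zero]
      exact fun h => by simp [h] at hr₀
    obtain ⟨x, hx⟩ := Multiset.exists_mem_of_ne_zero hne0
    rw [← Multiset.cons_erase hx, Multiset.sum_cons]
    have := Multiset.sum_nonneg (s := (F.roots.map (fun r => (z * (z - r)⁻¹).re)).erase x)
      (fun y hy => le_of_lt (hmem y (Multiset.mem_of_mem_erase hy)))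
    linarith [hmem x hx]
  rw [him] at hpos
  exact lt_irrefl 0 hpos

lemma delta_root_eq {n : ℕ} {lam : ℝ} (hlam : lam ≠ 0)
    (hsin : Real.sin (n * lam / 2) ≠ 0)
    {F : Polynomial ℂ} {z : ℂ} (hz : (Delta n lam F).IsRoot z) :
    F.eval (uexp (lam / 2) * z) = F.eval (uexp (-(lam / 2)) * z) := by
  rw [Delta, if_neg hlam] at hz
  have hc : ((2 * Complex.I * (Real.sin (n * lam / 2) : ℂ))⁻¹ : ℂ) ≠ 0 := by
    apply inv_ne_zero
    refine mul_ne_zero (mul_ne_zero (by norm_num) Complex.I_ne_zero) ?_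
    exact_mod_cast hsin
  have hz' : ((plusPoly lam F - minusPoly lam F).divX).eval z = 0 := by
    have h := hz
    rw [Polynomial.IsRoot, Polynomial.eval_mul, Polynomial.eval_C] at h
    rcases mul_eq_zero.mp h with h | h
    · exact absurd h hc
    · exact h
  set p := plusPoly lam F - minusPoly lam F with hp
  have h0 : p.coeff 0 = 0 := by
    rw [Polynomial.coeff_zero_eq_eval_zero]
    simp [hp, plusPoly, minusPoly, Polynomial.eval_comp]
  have hpz : p.eval z = 0 := by
    conv_lhs => rw [← Polynomial.X_mul_divX_add p]
    simp [hz', h0]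
  have h2 : (plusPoly lam F).eval z = (minusPoly lam F).eval z := by
    rw [hp] at hpz
    simpa [sub_eq_zero] using hpz
  simpa [plusPoly, minusPoly, Polynomial.eval_comp] using h2

lemma dQuot_im_of_ne {n : ℕ} {lam : ℝ} {F : Polynomial ℂ} {z : ℂ}
    (heq : F.eval (uexp (lam / 2) * z) = F.eval (uexp (-(lam / 2)) * z))
    (hden : F.eval (uexp (-(lam / 2)) * z) ≠ 0) :
    (dQuot n lam F z).im = -Real.sin (n * lam / 2) := by
  rw [dQuot, heq, mul_div_assoc, div_self hden, mul_one, uexp_im]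
  rw [show (-((n : ℝ) * lam) / 2 : ℝ) = -((n : ℝ) * lam / 2) by ring, Real.sin_neg]

lemma dQuot_im_of_eq {n : ℕ} {lam : ℝ} {F : Polynomial ℂ} {z : ℂ}
    (hden : F.eval (uexp (-(lam / 2)) * z) = 0) :
    (dQuot n lam F z).im = 0 := by
  rw [dQuot, hden, div_zero, Complex.zero_im]

lemma dQuot_im_nonpos {n : ℕ} {lam : ℝ} {F : Polynomial ℂ} {z : ℂ}
    (heq : F.eval (uexp (lam / 2) * z) = F.eval (uexp (-(lam / 2)) * z))
    (hsin : 0 < Real.sin (n * lam / 2)) :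
    (dQuot n lam F z).im ≤ 0 := by
  by_cases hden : F.eval (uexp (-(lam / 2)) * z) = 0
  · rw [dQuot_im_of_eq hden]
  · rw [dQuot_im_of_ne heq hden]; linarith

lemma bdry_nonneg {n : ℕ} {lam : ℝ} {F : Polynomial ℂ} {z : ℂ}
    (hden : F.eval (uexp (-(lam / 2)) * z) ≠ 0) (habs : ‖z‖ = 1)
    (hDb : ∀ w : ℂ, 1 < ‖w‖ → 0 < (dQuot n lam F w).im) :
    0 ≤ (dQuot n lam F z).im := by
  set f : ℝ → ℝ := fun t => (dQuot n lam F ((t : ℂ) * z)).im with hf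
  have c1 : Continuous fun t : ℝ =>
      uexp (-((n : ℝ) * lam) / 2) * F.eval (uexp (lam / 2) * ((t : ℂ) * z)) :=
    continuous_const.mul (F.continuous.comp (by continuity))
  have c2 : Continuous fun t : ℝ => F.eval (uexp (-(lam / 2)) * ((t : ℂ) * z)) :=
    F.continuous.comp (by continuity)
  have hcont : ContinuousAt f 1 := by
    apply Complex.continuous_im.continuousAt.comp
    apply ContinuousAt.div c1.continuousAt c2.continuousAt
    simpa using hden
  have htend : Filter.Tendsto f (nhdsWithin 1 (Set.Ioi 1)) (nhds (f 1)) :=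
    hcont.tendsto.mono_left nhdsWithin_le_nhds
  have hev : ∀ᶠ t in nhdsWithin (1 : ℝ) (Set.Ioi 1), 0 ≤ f t := by
    filter_upwards [self_mem_nhdsWithin] with t ht
    have ht1 : (1 : ℝ) < t := ht
    have : 1 < ‖(t : ℂ) * z‖ := by
      rw [norm_mul, Complex.norm_real, Real.norm_eq_abs, habs, mul_one, abs_of_pos (by linarith)]
      exact ht1
    exact (hDb _ this).le
  have h1 : 0 ≤ f 1 := ge_of_tendsto htend hev
  simpa [hf] using h1

end MyAux

theorem stmt7 (n : ℕ) (hn : 1 ≤ n) (lam : ℝ) (h0 : 0 ≤ lam) (h1 : lam < 2 * Real.pi / n)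
    (F : Polynomial ℂ) (hF : F ∈ Dbar n lam) :
    (∀ z : ℂ, (Delta n lam F).IsRoot z → ‖z‖ ≤ 1) ∧
      (F ∈ Dset n lam → ∀ z : ℂ, (Delta n lam F).IsRoot z → ‖z‖ < 1) := by
  classical
  have hnR : (0 : ℝ) < n := by exact_mod_cast hn
  have hlam2pi : lam < 2 * Real.pi := lt_of_lt_of_le h1 (by
    apply div_le_self (by positivity) (by exact_mod_cast hn))
  by_cases hlam : lam = 0
  · -- λ = 0 : Gauss–Lucas style argument
    subst hlam
    rw [Dbar, if_pos rfl] at hF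
    obtain ⟨hdeg, hroots⟩ := hF
    have hn0 : ((n : ℂ))⁻¹ ≠ 0 := inv_ne_zero (Nat.cast_ne_zero.2 (by omega))
    have hder : ∀ z : ℂ, (Delta n 0 F).IsRoot z → F.derivative.eval z = 0 := by
      intro z hz
      rw [Delta, if_pos rfl, Polynomial.IsRoot, Polynomial.eval_mul, Polynomial.eval_C] at hz
      rcases mul_eq_zero.mp hz with h | h
      · exact absurd h hn0
      · exact h
    have hdpos : 0 < F.natDegree := by omega
    have part1 : ∀ z : ℂ, (Delta n 0 F).IsRoot z → ‖z‖ ≤ 1 := by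
      intro z hz
      by_contra hgt
      push_neg at hgt
      have hznr : F.eval z ≠ 0 := by
        intro h
        have := hroots z h
        simp only [Set.mem_setOf_eq] at this
        linarith
      exact deriv_ne_zero F z hdpos hznr
        (fun r hr => le_trans (hroots r (Polynomial.isRoot_of_mem_roots hr)) hgt.le)
        (hder z hz)
    refine ⟨part1, ?_⟩
    intro hD z hz
    by_contra hge
    push_neg at hge
    rcases hD with hTs | hOp
    · -- F ∈ Tstrict n 0 : roots on circle, all simple
      obtain ⟨a, θ, ha, hFeq, hsep⟩ := hTs
      by_cases hroot : F.eval z = 0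
      · -- z is a (simple) root of F on the circle
        obtain ⟨j₀, -, hj₀⟩ : ∃ j ∈ Finset.univ, z - uexp (θ j) = 0 := by
          rw [hFeq, Polynomial.eval_mul, Polynomial.eval_C, Polynomial.eval_prod] at hroot
          have := (mul_eq_zero.mp hroot).resolve_left ha
          obtain ⟨j, hj, hj2⟩ := Finset.prod_eq_zero_iff.mp this
          exact ⟨j, hj, by simpa using hj2⟩
        have hzj : z = uexp (θ j₀) := by rwa [sub_eq_zero] at hj₀
        have hG : F = (X - C z) *
            (C a * ∏ j ∈ Finset.univ.erase j₀, (X - C (uexp (θ j)))) := by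
          rw [hFeq, ← Finset.mul_prod_erase Finset.univ _ (Finset.mem_univ j₀), hzj]
          ring
        have hdz : F.derivative.eval z
            = a * ∏ j ∈ Finset.univ.erase j₀, (z - uexp (θ j)) := by
          rw [hG, Polynomial.derivative_mul]
          simp [Polynomial.eval_prod]
        have : F.derivative.eval z ≠ 0 := by
          rw [hdz]
          apply mul_ne_zero ha
          apply Finset.prod_ne_zero_iff.2
          intro j hj
          rw [hzj, sub_ne_zero]
          exact uexp_ne_of_angDist_pos le_rfl
            (hsep j₀ j (fun h => (Finset.mem_erase.mp hj).1 h.symm))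
        exact this (hder z hz)
      · exact deriv_ne_zero F z hdpos hroot
          (fun r hr => le_trans (hroots r (Polynomial.isRoot_of_mem_roots hr)) hge)
          (hder z hz)
    · rw [if_pos rfl] at hOp
      obtain ⟨-, hroots'⟩ := hOp
      have hznr : F.eval z ≠ 0 := by
        intro h
        have := hroots' z h
        simp only [Set.mem_setOf_eq] at this
        linarith
      exact deriv_ne_zero F z hdpos hznr
        (fun r hr => le_trans (hroots' r (Polynomial.isRoot_of_mem_roots hr)).le hge)
        (hder z hz)
  · -- λ ≠ 0
    have hlp : 0 < lam := lt_of_le_of_ne h0 (Ne.symm hlam)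
    have hne2 : lam ≠ 2 * Real.pi / n := ne_of_lt h1
    rw [Dbar, if_neg hlam, if_neg hne2] at hF
    obtain ⟨hdeg, hIm⟩ := hF
    have hsin : 0 < Real.sin ((n : ℝ) * lam / 2) := by
      apply Real.sin_pos_of_pos_of_lt_pi
      · positivity
      · have : lam * n < 2 * Real.pi := (lt_div_iff₀ hnR).mp h1
        nlinarith
    have part1 : ∀ z : ℂ, (Delta n lam F).IsRoot z → ‖z‖ ≤ 1 := by
      intro z hz
      by_contra hgt
      push_neg at hgt
      have heq := delta_root_eq hlam hsin.ne' hz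
      have hle := dQuot_im_nonpos heq hsin
      have := hIm z hgt
      linarith
    refine ⟨part1, ?_⟩
    intro hD z hz
    by_contra hge
    push_neg at hge
    have heq := delta_root_eq hlam hsin.ne' hz
    rcases hD with hTs | hIm'
    · have habs1 : ‖z‖ = 1 := le_antisymm (part1 z hz) hge
      by_cases hden : F.eval (uexp (-(lam / 2)) * z) = 0
      · -- both shifted points are roots of F, at angular distance λ : contradiction
        obtain ⟨a, θ, ha, hFeq, hsep⟩ := hTs
        have hnum : F.eval (uexp (lam / 2) * z) = 0 := heq.trans hden
        have hex : ∀ w : ℂ, F.eval w = 0 → ∃ j, w = uexp (θ j) := by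
          intro w hw
          rw [hFeq, Polynomial.eval_mul, Polynomial.eval_C, Polynomial.eval_prod] at hw
          have := (mul_eq_zero.mp hw).resolve_left ha
          obtain ⟨j, -, hj2⟩ := Finset.prod_eq_zero_iff.mp this
          exact ⟨j, by simpa [sub_eq_zero] using hj2⟩
        obtain ⟨j, hj⟩ := hex _ hden
        obtain ⟨k, hk⟩ := hex _ hnum
        have hrel : uexp (θ k) = uexp (lam + θ j) := by
          rw [uexp_add, ← hk, ← hj, ← mul_assoc, ← uexp_add]
          congr 2
          ring
        obtain ⟨m, hm⟩ := uexp_inj hrel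
        have hjk : j ≠ k := by
          intro hjk
          subst hjk
          have : lam = -(m : ℝ) * (2 * Real.pi) := by linarith
          rcases lt_trichotomy (m : ℝ) 0 with hm0 | hm0 | hm0
          · have : (m : ℝ) ≤ -1 := by exact_mod_cast Int.le_of_lt_add_one (by exact_mod_cast hm0)
            nlinarith [Real.pi_pos]
          · rw [hm0] at this; simp at this; linarith
          · nlinarith [Real.pi_pos]
        have hsep' := hsep j k hjk
        have : angDist (θ j) (θ k) ≤ lam :=
          angDist_le h0 (-m) (by push_cast; linarith)
        linarith
      · have hnn := bdry_nonneg hden habs1 hIm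
        rw [dQuot_im_of_ne heq hden] at hnn
        linarith
    · rw [if_neg hlam] at hIm'
      have := hIm'.2 z hge
      have hle := dQuot_im_nonpos heq hsin
      linarith
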